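/- Let ψ = √((1+r)/2)·e₁ ⊗ e₁ + √((1−r)/2)·e₂ ⊗ e₂ with r ∈ [0,1], and let z = |θφ⟩ = (cos(θ/2)e^{-iφ/2}, sin(θ/2)e^{iφ/2}). Then ‖F₁₂(ψ)(z)‖² = (1 + r·cosθ)/2. In particular, orthogonal unit vectors z = |θφ⟩ and z' = |π−θ, φ+π⟩ with θ ∉ {0,π} are mapped by F₁₂(ψ) to orthogonal vectors if and only if r = 0. -/

import Mathlib

open Complex
open scoped InnerProductSpace

abbrev Qubit := EuclideanSpace ℂ (Fin 2)

noncomputable def ket (θ φ : ℝ) : Qubit :=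
  WithLp.toLp 2 ![Real.cos (θ/2) * Complex.exp (-Complex.I * (φ/2)),
    Real.sin (θ/2) * Complex.exp (Complex.I * (φ/2))]

/-- The constraint function `F₁₂(ψ)` of the Schmidt-diagonal state
`ψ = √((1+r)/2) e₁⊗e₁ + √((1−r)/2) e₂⊗e₂` (in the standard basis). -/
noncomputable def F12schmidt (r : ℝ) (z : Qubit) : Qubit :=
  WithLp.toLp 2 ![(Real.sqrt ((1 + r) / 2) : ℂ) * starRingEnd ℂ (z 0),
    (Real.sqrt ((1 - r) / 2) : ℂ) * starRingEnd ℂ (z 1)]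

theorem F12_norm_and_orthogonality (r θ φ : ℝ) (hr : r ∈ Set.Icc (0:ℝ) 1) :
    ‖F12schmidt r (ket θ φ)‖ ^ 2 = (1 + r * Real.cos θ) / 2 ∧
    (θ ∈ Set.Ioo 0 Real.pi →
      (⟪F12schmidt r (ket θ φ), F12schmidt r (ket (Real.pi - θ) (φ + Real.pi))⟫_ℂ = 0 ↔ r = 0)) := by
  obtain ⟨hr0, hr1⟩ := hr
  have h1 : (0:ℝ) ≤ (1+r)/2 := by linarith
  have h2 : (0:ℝ) ≤ (1-r)/2 := by linarith
  have key : ⟪F12schmidt r (ket θ φ), F12schmidt r (ket (Real.pi - θ) (φ + Real.pi))⟫_ℂ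
      = Complex.I * (r * (Real.sin (θ/2) * Real.cos (θ/2))) := by
    have k1 : Real.cos ((Real.pi - θ)/2) = Real.sin (θ/2) := by
      rw [show (Real.pi - θ)/2 = Real.pi/2 - θ/2 by ring, Real.cos_pi_div_two_sub]
    have k2 : Real.sin ((Real.pi - θ)/2) = Real.cos (θ/2) := by
      rw [show (Real.pi - θ)/2 = Real.pi/2 - θ/2 by ring, Real.sin_pi_div_two_sub]
    have E1 : Complex.exp (-Complex.I * ((φ:ℂ)/2)) * Complex.exp (Complex.I * (((φ:ℂ)+(Real.pi:ℂ))/2)) = Complex.I := by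
      rw [← Complex.exp_add, show -Complex.I * ((φ:ℂ)/2) + Complex.I * (((φ:ℂ)+(Real.pi:ℂ))/2) = ((Real.pi/2 : ℝ):ℂ) * Complex.I by push_cast; ring,
        Complex.exp_mul_I, ← Complex.ofReal_cos, ← Complex.ofReal_sin,
        Real.cos_pi_div_two, Real.sin_pi_div_two]
      simp
    have E2 : Complex.exp (Complex.I * ((φ:ℂ)/2)) * Complex.exp (-Complex.I * (((φ:ℂ)+(Real.pi:ℂ))/2)) = -Complex.I := by
      rw [← Complex.exp_add, show Complex.I * ((φ:ℂ)/2) + -Complex.I * (((φ:ℂ)+(Real.pi:ℂ))/2) = ((-(Real.pi/2) : ℝ):ℂ) * Complex.I by push_cast; ring,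
        Complex.exp_mul_I, ← Complex.ofReal_cos, ← Complex.ofReal_sin,
        Real.cos_neg, Real.sin_neg, Real.cos_pi_div_two, Real.sin_pi_div_two]
      simp
    have sq1 : ((Real.sqrt ((1+r)/2) : ℝ):ℂ) * ((Real.sqrt ((1+r)/2) : ℝ):ℂ) = (((1+r)/2 : ℝ):ℂ) := by
      rw [← Complex.ofReal_mul, Real.mul_self_sqrt h1]
    have sq2 : ((Real.sqrt ((1-r)/2) : ℝ):ℂ) * ((Real.sqrt ((1-r)/2) : ℝ):ℂ) = (((1-r)/2 : ℝ):ℂ) := by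
      rw [← Complex.ofReal_mul, Real.mul_self_sqrt h2]
    simp only [PiLp.inner_apply, RCLike.inner_apply, Fin.sum_univ_two, F12schmidt, ket,
      Matrix.cons_val_zero, Matrix.cons_val_one, Matrix.head_cons, map_mul, Complex.conj_conj,
      Complex.conj_ofReal, ← Complex.exp_conj, map_neg, Complex.conj_I, map_div₀, map_add,
      map_ofNat, k1, k2]
    simp only [neg_neg, Complex.ofReal_add]
    push_cast at sq1 sq2
    linear_combination (↑(Real.cos (θ/2)) * ↑(Real.sin (θ/2)) * (Complex.exp (-Complex.I * ((φ:ℂ)/2)) * Complex.exp (Complex.I * (((φ:ℂ)+(Real.pi:ℂ))/2)))) * sq1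
      + (↑(Real.cos (θ/2)) * ↑(Real.sin (θ/2)) * (Complex.exp (Complex.I*((φ:ℂ)/2)) * Complex.exp (-Complex.I * (((φ:ℂ)+(Real.pi:ℂ))/2)))) * sq2
      + ((1+(r:ℂ))/2) * ↑(Real.cos (θ/2)) * ↑(Real.sin (θ/2)) * E1
      + ((1-(r:ℂ))/2) * ↑(Real.cos (θ/2)) * ↑(Real.sin (θ/2)) * E2
  constructor
  · have hexp : ∀ t : ℂ, t.re = 0 → ‖Complex.exp t‖ = 1 := by
      intro t ht
      rw [Complex.norm_exp, ht, Real.exp_zero]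
    have n0 : ‖F12schmidt r (ket θ φ) 0‖^2 = (1+r)/2 * Real.cos (θ/2)^2 := by
      simp only [F12schmidt, ket, Matrix.cons_val_zero, norm_mul, RCLike.norm_conj,
        Complex.norm_real, Real.norm_eq_abs, PiLp.toLp_apply]
      rw [hexp _ (by simp)]
      rw [mul_one, mul_pow, _root_.sq_abs, _root_.sq_abs, Real.sq_sqrt h1]
    have n1 : ‖F12schmidt r (ket θ φ) 1‖^2 = (1-r)/2 * Real.sin (θ/2)^2 := by
      simp only [F12schmidt, ket, Matrix.cons_val_one, Matrix.head_cons, norm_mul, RCLike.norm_conj,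
        Complex.norm_real, Real.norm_eq_abs, PiLp.toLp_apply, Matrix.cons_val_zero]
      rw [hexp _ (by simp)]
      rw [mul_one, mul_pow, _root_.sq_abs, _root_.sq_abs, Real.sq_sqrt h2]
    have hc : Real.cos (θ/2)^2 = 1/2 + Real.cos θ / 2 := by
      have := Real.cos_sq (θ/2); rwa [show 2*(θ/2)=θ by ring] at this
    have hs : Real.sin (θ/2)^2 = 1 - Real.cos (θ/2)^2 := by
      nlinarith [Real.sin_sq_add_cos_sq (θ/2)]
    rw [EuclideanSpace.norm_eq, Real.sq_sqrt (Finset.sum_nonneg fun i _ => sq_nonneg _),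
      Fin.sum_univ_two, n0, n1, hs, hc]
    ring
  · rintro ⟨hθ0, hθπ⟩
    have hsin : 0 < Real.sin (θ/2) :=
      Real.sin_pos_of_pos_of_lt_pi (by linarith) (by linarith [Real.pi_pos])
    have hcos : 0 < Real.cos (θ/2) :=
      Real.cos_pos_of_mem_Ioo ⟨by linarith [Real.pi_pos], by linarith⟩
    rw [key]
    constructor
    · intro h
      simp only [mul_eq_zero, Complex.I_ne_zero, Complex.ofReal_eq_zero, false_or] at h
      rcases h with h | h | h
      · exact h
      · exact absurd h hsin.ne'
      · exact absurd h hcos.ne'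
    · intro h; simp [h]
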